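/- Let (x_k) be iterates of the randomized Kaczmarz method with mismatched adjoint, consistent system A x̂ = b, and M = I − VᵀDA. Then E(x_k − x̂) = M^k (x_0 − x̂), and hence ‖E(x_k − x̂)‖ ≤ ‖I − VᵀDA‖^k·‖x_0 − x̂‖. In particular, if the spectral radius ρ(I − VᵀDA) < 1 then E(x_k − x̂) → 0 as k → ∞. -/

import Mathlib

open Matrix Finset Filter Topology
open scoped ENNReal NNReal

noncomputable def enorm' {n : ℕ} (v : Fin n → ℝ) : ℝ := Real.sqrt (v ⬝ᵥ v)

/-- Spectral (Euclidean operator) norm of a square real matrix. -/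
noncomputable def specNorm {n : ℕ} (M : Matrix (Fin n) (Fin n) ℝ) : ℝ :=
  ‖LinearMap.toContinuousLinearMap (Matrix.toEuclideanLin M)‖

/-- Iterates of the randomized Kaczmarz method with mismatched adjoint along a given
sequence of chosen row indices `ω`. -/
noncomputable def rkmaIter {m n : ℕ} (A V : Matrix (Fin m) (Fin n) ℝ) (b : Fin m → ℝ)
    (x0 : Fin n → ℝ) : (k : ℕ) → (Fin k → Fin m) → (Fin n → ℝ)
  | 0, _ => x0
  | k + 1, ω =>
      let x := rkmaIter A V b x0 k (fun j => ω j.castSucc)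
      let i := ω (Fin.last k)
      x - ((A i ⬝ᵥ x - b i) / (A i ⬝ᵥ V i)) • V i

lemma enorm'_eq {n : ℕ} (v : Fin n → ℝ) :
    enorm' v = ‖(WithLp.equiv 2 (Fin n → ℝ)).symm v‖ := by
  simp [enorm', EuclideanSpace.norm_eq, dotProduct, Real.norm_eq_abs, sq_abs, sq]

lemma enorm'_mulVec_le {n : ℕ} (N : Matrix (Fin n) (Fin n) ℝ) (w : Fin n → ℝ) :
    enorm' (N.mulVec w) ≤ specNorm N * enorm' w := by
  rw [enorm'_eq, enorm'_eq, WithLp.equiv_symm_apply, ← Matrix.toEuclideanLin_apply_piLp_toLp]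
  exact (LinearMap.toContinuousLinearMap (Matrix.toEuclideanLin N)).le_opNorm _

lemma specNorm_pow_le {n : ℕ} (N : Matrix (Fin n) (Fin n) ℝ) (k : ℕ) :
    specNorm (N ^ k) ≤ specNorm N ^ k := by
  induction k with
  | zero =>
    rw [pow_zero, pow_zero]
    have h1 : LinearMap.toContinuousLinearMap (Matrix.toEuclideanLin (1 : Matrix (Fin n) (Fin n) ℝ))
        = ContinuousLinearMap.id ℝ _ := by
      ext x
      simp [Matrix.toEuclideanLin_apply, Matrix.one_mulVec]
    rw [specNorm, h1]
    exact ContinuousLinearMap.norm_id_le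
  | succ k ih =>
    have hcomp : LinearMap.toContinuousLinearMap (Matrix.toEuclideanLin (N ^ (k+1)))
        = (LinearMap.toContinuousLinearMap (Matrix.toEuclideanLin N)).comp
          (LinearMap.toContinuousLinearMap (Matrix.toEuclideanLin (N ^ k))) := by
      ext x
      simp [Matrix.toEuclideanLin_apply, pow_succ']
    calc specNorm (N ^ (k+1)) ≤ specNorm N * specNorm (N ^ k) := by
          rw [specNorm, hcomp]; exact ContinuousLinearMap.opNorm_comp_le _ _
      _ ≤ specNorm N * specNorm N ^ k :=
          mul_le_mul_of_nonneg_left ih (norm_nonneg _)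
      _ = specNorm N ^ (k+1) := (pow_succ' _ _).symm


lemma transpose_mulVec_eq_sum {m n : ℕ} (V : Matrix (Fin m) (Fin n) ℝ) (w : Fin m → ℝ) :
    Vᵀ *ᵥ w = ∑ i, w i • V i := by
  ext l
  simp [Matrix.mulVec, dotProduct, Matrix.transpose_apply, Finset.sum_apply, mul_comm]

lemma expectation_step {m n : ℕ} (A V : Matrix (Fin m) (Fin n) ℝ)
    (p : Fin m → ℝ) (hps : ∑ i, p i = 1)
    (hav : ∀ i, 0 < A i ⬝ᵥ V i) (e : Fin n → ℝ) :
    ∑ i, p i • (e - ((A i ⬝ᵥ e) / (A i ⬝ᵥ V i)) • V i)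
      = (1 - Vᵀ * Matrix.diagonal (fun i => p i / (A i ⬝ᵥ V i)) * A).mulVec e := by
  rw [Matrix.sub_mulVec, Matrix.one_mulVec, ← Matrix.mulVec_mulVec, ← Matrix.mulVec_mulVec]
  have hDA : (Matrix.diagonal (fun i => p i / (A i ⬝ᵥ V i))).mulVec (A.mulVec e)
      = fun i => (p i / (A i ⬝ᵥ V i)) * (A i ⬝ᵥ e) := by
    ext i
    rw [Matrix.mulVec_diagonal]
    rfl
  rw [hDA, transpose_mulVec_eq_sum]
  have : ∑ i, p i • (e - ((A i ⬝ᵥ e) / (A i ⬝ᵥ V i)) • V i)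
      = (∑ i, p i) • e - ∑ i, (p i / (A i ⬝ᵥ V i) * (A i ⬝ᵥ e)) • V i := by
    rw [Finset.sum_smul, ← Finset.sum_sub_distrib]
    congr 1
    ext i
    rw [smul_sub, smul_smul]
    congr 2
    field_simp
  rw [this, hps, one_smul]

lemma expectation_eq {m n : ℕ} (A V : Matrix (Fin m) (Fin n) ℝ)
    (p : Fin m → ℝ) (hps : ∑ i, p i = 1)
    (hav : ∀ i, 0 < A i ⬝ᵥ V i)
    (b : Fin m → ℝ) (xhat : Fin n → ℝ) (hb : A.mulVec xhat = b)
    (x0 : Fin n → ℝ) (k : ℕ) :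
    ∑ ω : Fin k → Fin m, (∏ j, p (ω j)) • (rkmaIter A V b x0 k ω - xhat)
      = ((1 - Vᵀ * Matrix.diagonal (fun i => p i / (A i ⬝ᵥ V i)) * A) ^ k).mulVec (x0 - xhat) := by
  set M := 1 - Vᵀ * Matrix.diagonal (fun i => p i / (A i ⬝ᵥ V i)) * A with hM
  induction k with
  | zero =>
    simp [rkmaIter, Matrix.one_mulVec]
  | succ k ih =>
    -- reindex the sum over Fin (k+1) → Fin m
    rw [← (Fin.insertNthEquiv (fun _ => Fin m) (Fin.last k)).sum_comp
        (fun ω => (∏ j, p (ω j)) • (rkmaIter A V b x0 (k+1) ω - xhat))]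
    rw [Fintype.sum_prod_type]
    have hres : ∀ (i : Fin m) (ω' : Fin k → Fin m) (j : Fin k),
        (Fin.insertNthEquiv (fun _ => Fin m) (Fin.last k)) (i, ω') j.castSucc = ω' j := by
      intro i ω' j
      simp [Fin.insertNthEquiv, Fin.insertNth_last', Fin.succAbove_last, Fin.snoc_castSucc]
    have hlast : ∀ (i : Fin m) (ω' : Fin k → Fin m),
        (Fin.insertNthEquiv (fun _ => Fin m) (Fin.last k)) (i, ω') (Fin.last k) = i := by
      intro i ω'
      simp [Fin.insertNthEquiv]
    have hstep : ∀ (i : Fin m) (ω' : Fin k → Fin m),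
        rkmaIter A V b x0 (k+1) ((Fin.insertNthEquiv (fun _ => Fin m) (Fin.last k)) (i, ω')) - xhat
          = (rkmaIter A V b x0 k ω' - xhat)
            - ((A i ⬝ᵥ (rkmaIter A V b x0 k ω' - xhat)) / (A i ⬝ᵥ V i)) • V i := by
      intro i ω'
      have hres' : (fun j : Fin k =>
          (Fin.insertNthEquiv (fun _ => Fin m) (Fin.last k)) (i, ω') j.castSucc) = ω' :=
        funext (hres i ω')
      have hbi : b i = A i ⬝ᵥ xhat := by rw [← hb]; rfl
      show (let x := rkmaIter A V b x0 k (fun j => _);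
            let i' := _; x - ((A i' ⬝ᵥ x - b i') / (A i' ⬝ᵥ V i')) • V i') - xhat = _
      simp only [hres', hlast]
      rw [hbi, dotProduct_sub]
      abel
    have hprod : ∀ (i : Fin m) (ω' : Fin k → Fin m),
        (∏ j : Fin (k+1), p ((Fin.insertNthEquiv (fun _ => Fin m) (Fin.last k)) (i, ω') j))
          = (∏ j : Fin k, p (ω' j)) * p i := by
      intro i ω'
      rw [Fin.prod_univ_castSucc]
      congr 1
      · exact Finset.prod_congr rfl (fun j _ => by rw [hres])
      · rw [hlast]
    -- rewrite each term
    have hmain : ∀ i : Fin m, ∀ ω' : Fin k → Fin m,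
        (∏ j : Fin (k+1), p ((Fin.insertNthEquiv (fun _ => Fin m) (Fin.last k)) (i, ω') j)) •
          (rkmaIter A V b x0 (k+1) ((Fin.insertNthEquiv (fun _ => Fin m) (Fin.last k)) (i, ω')) - xhat)
        = (∏ j : Fin k, p (ω' j)) • (p i • ((rkmaIter A V b x0 k ω' - xhat)
            - ((A i ⬝ᵥ (rkmaIter A V b x0 k ω' - xhat)) / (A i ⬝ᵥ V i)) • V i)) := by
      intro i ω'
      rw [hprod, hstep, mul_smul]
    calc ∑ i : Fin m, ∑ ω' : Fin k → Fin m,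
          (∏ j : Fin (k+1), p ((Fin.insertNthEquiv (fun _ => Fin m) (Fin.last k)) (i, ω') j)) •
            (rkmaIter A V b x0 (k+1) ((Fin.insertNthEquiv (fun _ => Fin m) (Fin.last k)) (i, ω')) - xhat)
        = ∑ ω' : Fin k → Fin m, ∑ i : Fin m, (∏ j : Fin k, p (ω' j)) •
            (p i • ((rkmaIter A V b x0 k ω' - xhat)
              - ((A i ⬝ᵥ (rkmaIter A V b x0 k ω' - xhat)) / (A i ⬝ᵥ V i)) • V i)) := by
          rw [Finset.sum_comm]
          exact Finset.sum_congr rfl fun ω' _ => Finset.sum_congr rfl fun i _ => hmain i ω'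
      _ = ∑ ω' : Fin k → Fin m, (∏ j : Fin k, p (ω' j)) •
            M.mulVec (rkmaIter A V b x0 k ω' - xhat) := by
          refine Finset.sum_congr rfl fun ω' _ => ?_
          rw [← Finset.smul_sum, expectation_step A V p hps hav]
      _ = M.mulVec (∑ ω' : Fin k → Fin m, (∏ j : Fin k, p (ω' j)) •
            (rkmaIter A V b x0 k ω' - xhat)) := by
          symm
          rw [← Matrix.mulVecLin_apply, map_sum]
          simp [Matrix.mulVecLin_apply]
      _ = (M ^ (k+1)).mulVec (x0 - xhat) := by
          rw [ih, Matrix.mulVec_mulVec, ← pow_succ']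

section Part3

attribute [local instance] Matrix.linftyOpNormedRing Matrix.linftyOpNormedAlgebra

lemma nnnorm_map_complex {n : ℕ} (P : Matrix (Fin n) (Fin n) ℝ) :
    ‖P.map (algebraMap ℝ ℂ)‖₊ = ‖P‖₊ := by
  rw [Matrix.linfty_opNNNorm_def, Matrix.linfty_opNNNorm_def]
  congr 1
  ext i
  congr 1
  ext j
  simp [Matrix.map_apply]

lemma tendsto_pow_mulVec_of_spectralRadius_lt_one {n : ℕ} (M : Matrix (Fin n) (Fin n) ℝ)
    (h : spectralRadius ℂ (M.map (algebraMap ℝ ℂ)) < 1) (v : Fin n → ℝ) :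
    Tendsto (fun k => (M ^ k).mulVec v) atTop (𝓝 0) := by
  haveI : CompleteSpace (Matrix (Fin n) (Fin n) ℂ) := FiniteDimensional.complete ℂ _
  set Mc := M.map (algebraMap ℝ ℂ) with hMc
  obtain ⟨r, hρr, hr1⟩ := ENNReal.lt_iff_exists_nnreal_btwn.mp h
  have hrlt1 : (r : ℝ) < 1 := by exact_mod_cast hr1
  have hgel := spectrum.pow_nnnorm_pow_one_div_tendsto_nhds_spectralRadius Mc
  have hev : ∀ᶠ k : ℕ in atTop, (‖Mc ^ k‖₊ : ℝ≥0∞) ^ (1 / (k : ℝ)) < (r : ℝ≥0∞) :=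
    hgel.eventually_lt_const hρr
  have hbound : ∀ᶠ k in atTop, ‖(M ^ k : Matrix (Fin n) (Fin n) ℝ)‖ ≤ (r : ℝ) ^ k := by
    filter_upwards [hev, eventually_ge_atTop 1] with k hk hk1
    have hkpos : (0 : ℝ) < (k : ℝ) := by exact_mod_cast hk1
    have h1 : (‖Mc ^ k‖₊ : ℝ≥0∞) < (r : ℝ≥0∞) ^ k := by
      calc (‖Mc ^ k‖₊ : ℝ≥0∞)
          = ((‖Mc ^ k‖₊ : ℝ≥0∞) ^ (1 / (k : ℝ))) ^ (k : ℕ) := by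
            rw [← ENNReal.rpow_natCast (_ ^ _), ← ENNReal.rpow_mul, one_div,
              inv_mul_cancel₀ (ne_of_gt hkpos), ENNReal.rpow_one]
        _ < (r : ℝ≥0∞) ^ (k : ℕ) := ENNReal.pow_lt_pow_left (by omega) hk
    rw [← ENNReal.coe_pow, ENNReal.coe_lt_coe] at h1
    have h2 : ‖Mc ^ k‖₊ = ‖(M ^ k : Matrix (Fin n) (Fin n) ℝ)‖₊ := by
      rw [hMc, ← RingHom.mapMatrix_apply, ← map_pow, RingHom.mapMatrix_apply,
        nnnorm_map_complex]
    rw [h2] at h1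
    calc ‖(M ^ k : Matrix (Fin n) (Fin n) ℝ)‖ ≤ ((r ^ k : ℝ≥0) : ℝ) := le_of_lt h1
      _ = (r : ℝ) ^ k := by push_cast; ring
  have hg : Tendsto (fun k : ℕ => (r : ℝ) ^ k * ‖v‖) atTop (𝓝 0) := by
    simpa using (tendsto_pow_atTop_nhds_zero_of_lt_one r.coe_nonneg hrlt1).mul_const ‖v‖
  refine squeeze_zero_norm' ?_ hg
  · filter_upwards [hbound] with k hk
    calc ‖(M ^ k).mulVec v‖ ≤ ‖(M ^ k : Matrix (Fin n) (Fin n) ℝ)‖ * ‖v‖ :=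
          Matrix.linfty_opNorm_mulVec _ _
      _ ≤ (r : ℝ) ^ k * ‖v‖ := mul_le_mul_of_nonneg_right hk (norm_nonneg _)

end Part3

set_option maxHeartbeats 1000000 in
theorem rkma_expectation_powers {m n : ℕ} (A V : Matrix (Fin m) (Fin n) ℝ)
    (p : Fin m → ℝ) (hp : ∀ i, 0 < p i) (hps : ∑ i, p i = 1)
    (hav : ∀ i, 0 < A i ⬝ᵥ V i)
    (b : Fin m → ℝ) (xhat : Fin n → ℝ) (hb : A.mulVec xhat = b)
    (x0 : Fin n → ℝ)
    (D : Matrix (Fin m) (Fin m) ℝ)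
    (hD : D = Matrix.diagonal (fun i => p i / (A i ⬝ᵥ V i)))
    (M : Matrix (Fin n) (Fin n) ℝ) (hMdef : M = 1 - Vᵀ * D * A) :
    (∀ k : ℕ,
      ∑ ω : Fin k → Fin m, (∏ j, p (ω j)) • (rkmaIter A V b x0 k ω - xhat)
        = (M ^ k).mulVec (x0 - xhat)) ∧
    (∀ k : ℕ,
      enorm' (∑ ω : Fin k → Fin m, (∏ j, p (ω j)) • (rkmaIter A V b x0 k ω - xhat))
        ≤ (specNorm (1 - Vᵀ * D * A)) ^ k * enorm' (x0 - xhat)) ∧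
    (spectralRadius ℂ ((1 - Vᵀ * D * A).map (algebraMap ℝ ℂ)) < 1 →
      Filter.Tendsto
        (fun k => ∑ ω : Fin k → Fin m, (∏ j, p (ω j)) • (rkmaIter A V b x0 k ω - xhat))
        Filter.atTop (nhds 0)) := by
  subst hD hMdef hb
  have h1 := expectation_eq A V p hps hav _ xhat rfl x0
  refine ⟨h1, fun k => ?_, fun hρ => ?_⟩
  · rw [h1 k]
    refine (enorm'_mulVec_le _ _).trans ?_
    exact mul_le_mul_of_nonneg_right (specNorm_pow_le _ _) (Real.sqrt_nonneg _)
  · rw [funext h1]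
    exact tendsto_pow_mulVec_of_spectralRadius_lt_one _ hρ _
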